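/- Let f and g be one-variable tropical polynomials, neither identically −∞, with supports S_f, S_g ⊂ ℤ and coefficients (c_i^f)_{i∈S_f}, (c_i^g)_{i∈S_g}, and suppose f(x) = g(x) for all x ∈ ℝ. Then Newt(f) = Newt(g); moreover for every i ∈ ℤ, the set {x ∈ ℝ : i ∈ S_f and f(x) = c_i^f + ix} has nonempty interior if and only if the set {x ∈ ℝ : i ∈ S_g and g(x) = c_i^g + ix} has nonempty interior, and for every such i one has c_i^f = c_i^g. (In other words, f and g have the same dual subdivision.) -/

import Mathlib

open scoped Pointwise
open MeasureTheory

/-- A tropical (Laurent) polynomial in `n` variables: a finite support of integer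
exponent vectors together with real coefficients. -/
structure TropPoly (n : ℕ) where
  support : Finset (Fin n → ℤ)
  coeff : (Fin n → ℤ) → ℝ

namespace TropPoly

variable {n : ℕ}

/-- The affine term `c_i + ⟨i, x⟩` of a tropical polynomial. -/
noncomputable def term (f : TropPoly n) (i : Fin n → ℤ) (x : Fin n → ℝ) : ℝ :=
  f.coeff i + ∑ j, (i j : ℝ) * x j

/-- Evaluation of a tropical polynomial, with value `⊥ = -∞` when the support is empty. -/
noncomputable def eval (f : TropPoly n) (x : Fin n → ℝ) : EReal :=
  f.support.sup fun i => ((f.term i x : ℝ) : EReal)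

/-- The tropical hypersurface `V(f)`: points where the maximum is attained at least twice
(all of `ℝⁿ` when `f = -∞`). -/
def V (f : TropPoly n) : Set (Fin n → ℝ) :=
  {x | f.support = ∅ ∨ ∃ i ∈ f.support, ∃ j ∈ f.support, i ≠ j ∧
    f.eval x = (f.term i x : EReal) ∧ f.eval x = (f.term j x : EReal)}

/-- The tropical quotient `f ⊘ g` as an `EReal`-valued function. -/
noncomputable def tropDiv (f g : TropPoly n) (x : Fin n → ℝ) : EReal :=
  f.eval x - g.eval x

/-- Real realization of an integer exponent vector. -/
def expR {m : ℕ} : (Fin m → ℤ) → (Fin m → ℝ) := fun i j => (i j : ℝ)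

/-- The Newton polytope of a tropical polynomial. -/
noncomputable def Newt (f : TropPoly n) : Set (Fin n → ℝ) :=
  convexHull ℝ (expR '' (f.support : Set (Fin n → ℤ)))

/-- The polytope `conv(Newt(f) × {0} ∪ Newt(g) × {1}) ⊂ ℝ^{n+1}`, which is the Newton
polytope of `f ⊕ (x_{n+1} ⊙ g)`. -/
noncomputable def pairPolytope (f g : TropPoly n) : Set (Fin (n + 1) → ℝ) :=
  convexHull ℝ
    ((fun v : Fin n → ℝ => Fin.snoc v (0 : ℝ)) '' f.Newt ∪
     (fun v : Fin n → ℝ => Fin.snoc v (1 : ℝ)) '' g.Newt)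

open Classical in
/-- The volume of a pair of tropical polynomials: the `(n+1)`-dimensional Lebesgue measure
of `conv(Newt(f) × {0} ∪ Newt(g) × {1})` if it is full-dimensional, `0` otherwise. -/
noncomputable def vol (f g : TropPoly n) : ℝ :=
  if affineSpan ℝ (pairPolytope f g) = ⊤ then (volume (pairPolytope f g)).toReal else 0

open Classical in
/-- Monomial complexity: the number of linear regions of `f`. -/
noncomputable def mComp (f : TropPoly n) : ℕ :=
  (f.support.filter fun i =>
    (interior {x : Fin n → ℝ | f.eval x = (f.term i x : EReal)}).Nonempty).card

/-- Factorization complexity of a factorization `f = f₁ ⊙ ⋯ ⊙ f_m`. -/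
noncomputable def fComp (l : List (TropPoly n)) : ℤ :=
  (l.map fun h => (mComp h : ℤ)).sum - ((l.length : ℤ) - 1)

/-- A tropical polynomial is a unit (tropical monomial) if, as a function, it is
integer affine: `x ↦ a + ⟨k, x⟩`. -/
def IsUnit (g : TropPoly n) : Prop :=
  ∃ (a : ℝ) (k : Fin n → ℤ), ∀ x, g.eval x = ((a + ∑ j, (k j : ℝ) * x j : ℝ) : EReal)

/-- A tropical polynomial is irreducible if in any pointwise factorization
`f = g ⊙ h` one of the factors is a unit. -/
def IsIrreducible (f : TropPoly n) : Prop :=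
  ∀ g h : TropPoly n, (∀ x, f.eval x = g.eval x + h.eval x) → g.IsUnit ∨ h.IsUnit

/-- The tropical polynomial `f ⊕ (x_{n+1} ⊙ g)` in `n+1` variables, whose value at
`(x, t)` is `max (f x) (t + g x)`. -/
noncomputable def oplusShift (f g : TropPoly n) : TropPoly (n + 1) where
  support :=
    f.support.image (fun i => Fin.snoc i (0 : ℤ)) ∪
    g.support.image (fun i => Fin.snoc i (1 : ℤ))
  coeff := fun j =>
    if j (Fin.last n) = 0 then f.coeff (fun k => j k.castSucc)
    else g.coeff (fun k => j k.castSucc)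

open Classical in
/-- The tropical product `f ⊙ g`: supports add (Minkowski sum) and the coefficient of `k`
is the maximum of `f.coeff i + g.coeff j` over decompositions `k = i + j`. -/
noncomputable def tmul (f g : TropPoly n) : TropPoly n where
  support := f.support + g.support
  coeff := fun k =>
    WithBot.unbotD 0
      (((f.support ×ˢ g.support).filter fun p => p.1 + p.2 = k).sup
        fun p => ((f.coeff p.1 + g.coeff p.2 : ℝ) : WithBot ℝ))

end TropPoly

namespace TropAux

open TropPoly

lemma term_one (f : TropPoly 1) (i : Fin 1 → ℤ) (x : Fin 1 → ℝ) :
    f.term i x = f.coeff i + (i 0 : ℝ) * x 0 := by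
  simp [TropPoly.term, Fin.sum_univ_one]

lemma le_eval (f : TropPoly 1) {i : Fin 1 → ℤ} (hi : i ∈ f.support) (x : Fin 1 → ℝ) :
    ((f.term i x : ℝ) : EReal) ≤ f.eval x := by
  simp only [TropPoly.eval]
  exact Finset.le_sup (f := fun i => ((f.term i x : ℝ) : EReal)) hi

lemma eval_le (f : TropPoly 1) (x : Fin 1 → ℝ) {r : ℝ}
    (hr : ∀ i ∈ f.support, f.term i x ≤ r) : f.eval x ≤ (r : EReal) := by
  simp only [TropPoly.eval]
  exact Finset.sup_le fun i hi => EReal.coe_le_coe_iff.mpr (hr i hi)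

lemma exists_eval_eq (f : TropPoly 1) (hf : f.support.Nonempty) (x : Fin 1 → ℝ) :
    ∃ i ∈ f.support, f.eval x = ((f.term i x : ℝ) : EReal) := by
  simp only [TropPoly.eval]
  exact Finset.exists_mem_eq_sup _ hf _

lemma exp_le_sup (f g : TropPoly 1) (hg : g.support.Nonempty)
    (h : ∀ x, f.eval x = g.eval x) {i : Fin 1 → ℤ} (hi : i ∈ f.support) :
    i 0 ≤ g.support.sup' hg (fun j => j 0) := by
  by_contra hlt
  push_neg at hlt
  set M := g.support.sup' hg (fun j => j 0) with hM
  set C := g.support.sup' hg g.coeff with hC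
  set t : ℝ := |C - f.coeff i| + 1 with ht
  have ht0 : (0:ℝ) ≤ t := by positivity
  have hfle : f.eval (fun _ => t) ≤ ((C + (M : ℝ) * t : ℝ) : EReal) := by
    rw [h]
    apply eval_le
    intro j hj
    rw [term_one]
    have h1 : g.coeff j ≤ C := Finset.le_sup' _ hj
    have h2 : (j 0 : ℝ) * t ≤ (M : ℝ) * t := by
      apply mul_le_mul_of_nonneg_right _ ht0
      exact_mod_cast Finset.le_sup' (fun j : Fin 1 → ℤ => j 0) hj
    linarith
  have hge : ((f.coeff i + (i 0 : ℝ) * t : ℝ) : EReal) ≤ f.eval (fun _ => t) := by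
    have h3 := le_eval f hi (fun _ => t)
    rwa [term_one] at h3
  have hcomb : f.coeff i + (i 0 : ℝ) * t ≤ C + (M : ℝ) * t :=
    EReal.coe_le_coe_iff.mp (hge.trans hfle)
  have hMi : (M : ℝ) + 1 ≤ (i 0 : ℝ) := by exact_mod_cast hlt
  nlinarith [le_abs_self (C - f.coeff i), mul_le_mul_of_nonneg_right hMi ht0]

lemma inf_le_exp (f g : TropPoly 1) (hg : g.support.Nonempty)
    (h : ∀ x, f.eval x = g.eval x) {i : Fin 1 → ℤ} (hi : i ∈ f.support) :
    g.support.inf' hg (fun j => j 0) ≤ i 0 := by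
  by_contra hlt
  push_neg at hlt
  set m := g.support.inf' hg (fun j => j 0) with hm
  set C := g.support.sup' hg g.coeff with hC
  set t : ℝ := -(|C - f.coeff i| + 1) with ht
  have ht0 : t ≤ (0:ℝ) := by
    rw [ht]; nlinarith [abs_nonneg (C - f.coeff i)]
  have hfle : f.eval (fun _ => t) ≤ ((C + (m : ℝ) * t : ℝ) : EReal) := by
    rw [h]
    apply eval_le
    intro j hj
    rw [term_one]
    have h1 : g.coeff j ≤ C := Finset.le_sup' _ hj
    have h2 : (j 0 : ℝ) * t ≤ (m : ℝ) * t := by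
      apply mul_le_mul_of_nonpos_right _ ht0
      exact_mod_cast Finset.inf'_le (fun j : Fin 1 → ℤ => j 0) hj
    linarith
  have hge : ((f.coeff i + (i 0 : ℝ) * t : ℝ) : EReal) ≤ f.eval (fun _ => t) := by
    have h3 := le_eval f hi (fun _ => t)
    rwa [term_one] at h3
  have hcomb : f.coeff i + (i 0 : ℝ) * t ≤ C + (m : ℝ) * t :=
    EReal.coe_le_coe_iff.mp (hge.trans hfle)
  have hMi : (i 0 : ℝ) + 1 ≤ (m : ℝ) := by exact_mod_cast hlt
  nlinarith [le_abs_self (C - f.coeff i), mul_le_mul_of_nonpos_right hMi ht0]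

lemma newt_subset (f g : TropPoly 1) (hf : f.support.Nonempty) (hg : g.support.Nonempty)
    (h : ∀ x, f.eval x = g.eval x) : f.Newt ⊆ g.Newt := by
  rw [TropPoly.Newt]
  apply convexHull_min _ (convex_convexHull ℝ _)
  rintro p ⟨i, hi, rfl⟩
  obtain ⟨a, ha, haeq⟩ := Finset.exists_mem_eq_inf' hg (fun j : Fin 1 → ℤ => j 0)
  obtain ⟨b, hb, hbeq⟩ := Finset.exists_mem_eq_sup' hg (fun j : Fin 1 → ℤ => j 0)
  have h1 : (a 0 : ℝ) ≤ (i 0 : ℝ) := by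
    exact_mod_cast haeq ▸ inf_le_exp f g hg h hi
  have h2 : (i 0 : ℝ) ≤ (b 0 : ℝ) := by
    exact_mod_cast hbeq ▸ exp_le_sup f g hg h hi
  have hab : (a 0 : ℝ) ≤ (b 0 : ℝ) := h1.trans h2
  have hseg : (i 0 : ℝ) ∈ segment ℝ (a 0 : ℝ) (b 0 : ℝ) := by
    rw [segment_eq_Icc hab]; exact ⟨h1, h2⟩
  obtain ⟨u, v, hu, hv, huv, heq⟩ := hseg
  have hmem : expR i ∈ segment ℝ (expR a) (expR b) := by
    refine ⟨u, v, hu, hv, huv, ?_⟩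
    funext k
    have hk : k = 0 := Subsingleton.elim k 0
    subst hk
    simpa [TropPoly.expR] using heq
  refine segment_subset_convexHull ?_ ?_ hmem
  · exact ⟨a, ha, rfl⟩
  · exact ⟨b, hb, rfl⟩

lemma key (f g : TropPoly 1) (hg : g.support.Nonempty)
    (h : ∀ x, f.eval x = g.eval x) (i : Fin 1 → ℤ)
    (hne : (interior {x : Fin 1 → ℝ | i ∈ f.support ∧ f.eval x = ((f.term i x : ℝ) : EReal)}).Nonempty) :
    i ∈ g.support ∧ g.coeff i = f.coeff i := by
  classical
  obtain ⟨x₀, hx₀⟩ := hne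
  set A := {x : Fin 1 → ℝ | i ∈ f.support ∧ f.eval x = ((f.term i x : ℝ) : EReal)} with hA
  set T : Set ℝ := {t : ℝ | (fun _ => t) ∈ interior A} with hT
  have hTopen : IsOpen T :=
    isOpen_interior.preimage (continuous_pi fun _ => continuous_id)
  have hxmem : x₀ 0 ∈ T := by
    have hxx : (fun _ : Fin 1 => x₀ 0) = x₀ := funext fun j => by
      rw [Subsingleton.elim j 0]
    simpa [hT, hxx] using hx₀
  have hTinf : T.Infinite := by
    obtain ⟨ε, hε, hball⟩ := Metric.isOpen_iff.mp hTopen _ hxmem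
    have : Set.Ioo (x₀ 0 - ε) (x₀ 0 + ε) ⊆ T := by
      rw [← Real.ball_eq_Ioo]; exact hball
    exact (Set.Ioo_infinite (by linarith)).mono this
  have hTA : ∀ t ∈ T, i ∈ f.support ∧
      g.eval (fun _ => t) = ((f.coeff i + (i 0 : ℝ) * t : ℝ) : EReal) := by
    intro t ht
    have hmem : (fun _ : Fin 1 => t) ∈ A := interior_subset ht
    obtain ⟨hif, hev⟩ := hmem
    refine ⟨hif, ?_⟩
    rw [← h, hev, term_one]
  choose φ hφ1 hφ2 using fun t : ℝ => exists_eval_eq g hg (fun _ => t)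
  obtain ⟨t₁, ht₁, t₂, ht₂, htne, hφeq⟩ :=
    hTinf.exists_ne_map_eq_of_mapsTo (f := φ) (fun t _ => hφ1 t) g.support.finite_toSet
  set j := φ t₁ with hj
  have e1 : g.coeff j + (j 0 : ℝ) * t₁ = f.coeff i + (i 0 : ℝ) * t₁ := by
    have := (hφ2 t₁).symm.trans ((hTA t₁ ht₁).2)
    rw [term_one] at this
    exact_mod_cast this
  have e2 : g.coeff j + (j 0 : ℝ) * t₂ = f.coeff i + (i 0 : ℝ) * t₂ := by
    have := (hφ2 t₂).symm.trans ((hTA t₂ ht₂).2)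
    rw [term_one, ← hφeq] at this
    exact_mod_cast this
  have hslope : (j 0 : ℝ) = (i 0 : ℝ) := by
    have hsub : ((j 0 : ℝ) - (i 0 : ℝ)) * (t₁ - t₂) = 0 := by ring_nf; linarith
    rcases mul_eq_zero.mp hsub with h' | h'
    · linarith
    · exact absurd (by linarith : t₁ = t₂) htne
  have hji : j = i := by
    funext k
    rw [Subsingleton.elim k 0]
    exact_mod_cast hslope
  have hcoeff : g.coeff j = f.coeff i := by rw [hslope] at e1; linarith
  exact ⟨hji ▸ hφ1 t₁, hji ▸ hcoeff⟩
lemma regions_subset (f g : TropPoly 1) (hg : g.support.Nonempty)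
    (h : ∀ x, f.eval x = g.eval x) (i : Fin 1 → ℤ)
    (hne : (interior {x : Fin 1 → ℝ | i ∈ f.support ∧ f.eval x = ((f.term i x : ℝ) : EReal)}).Nonempty) :
    {x : Fin 1 → ℝ | i ∈ f.support ∧ f.eval x = ((f.term i x : ℝ) : EReal)} ⊆
      {x : Fin 1 → ℝ | i ∈ g.support ∧ g.eval x = ((g.term i x : ℝ) : EReal)} := by
  obtain ⟨hig, hcg⟩ := key f g hg h i hne
  intro x hx
  refine ⟨hig, ?_⟩
  rw [← h, hx.2]
  congr 1
  rw [term_one, term_one, hcg]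

end TropAux

open TropAux in
/-- **One-variable tropical polynomials that are equal as functions have the same dual
subdivision**: the Newton polytopes agree, an exponent has a full-dimensional linearity
region for `f` iff it does for `g`, and on such exponents the coefficients agree. -/
theorem eq_as_functions_same_dual_subdivision (f g : TropPoly 1)
    (hf : f.support.Nonempty) (hg : g.support.Nonempty)
    (h : ∀ x, f.eval x = g.eval x) :
    f.Newt = g.Newt ∧
    ∀ i : Fin 1 → ℤ,
      ((interior {x : Fin 1 → ℝ | i ∈ f.support ∧ f.eval x = (f.term i x : EReal)}).Nonempty ↔
       (interior {x : Fin 1 → ℝ | i ∈ g.support ∧ g.eval x = (g.term i x : EReal)}).Nonempty) ∧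
      ((interior {x : Fin 1 → ℝ | i ∈ f.support ∧ f.eval x = (f.term i x : EReal)}).Nonempty →
        f.coeff i = g.coeff i) := by
  have h' : ∀ x, g.eval x = f.eval x := fun x => (h x).symm
  refine ⟨(newt_subset f g hf hg h).antisymm (newt_subset g f hg hf h'), fun i => ⟨⟨?_, ?_⟩, ?_⟩⟩
  · intro hne
    exact hne.mono (interior_mono (regions_subset f g hg h i hne))
  · intro hne
    exact hne.mono (interior_mono (regions_subset g f hf h' i hne))
  · intro hne
    exact (key f g hg h i hne).2.symm
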